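/- A sequence d = (d_1, ..., d_n) of nonnegative integers in decreasing order is bipartite graphic if and only if, for each integer k with 1 ≤ k ≤ n, ∑_{i=1}^k d_i ≤ k^2 + ∑_{i=k+1}^n min{k, d_i}. -/

import Mathlib

open Finset

lemma lower_eq_range (S : Finset ℕ) (h : ∀ j ∈ S, ∀ i < j, i ∈ S) :
    S = range S.card := by
  ext i
  simp only [mem_range]
  constructor
  · intro hi
    by_contra hlt
    push_neg at hlt
    have hsub : range (i+1) ⊆ S := by
      intro j hj
      simp only [mem_range, Nat.lt_succ_iff] at hj
      rcases eq_or_lt_of_le hj with rfl | hj'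
      · exact hi
      · exact h i hi j hj'
    have := Finset.card_le_card hsub
    simp only [card_range] at this
    omega
  · intro hi
    by_contra hni
    have hsub : S ⊆ range i := by
      intro j hj
      simp only [mem_range]
      by_contra hji
      push_neg at hji
      rcases eq_or_lt_of_le hji with rfl | h'
      · exact hni hj
      · exact hni (h j hj i h')
    have := Finset.card_le_card hsub
    simp only [card_range] at this
    omega

lemma sum_range_Ico (m n : ℕ) (h : m ≤ n) (f : ℕ → ℕ) :
    ∑ i ∈ range n, f i = ∑ i ∈ range m, f i + ∑ i ∈ Ico m n, f i := by
  rw [Finset.range_eq_Ico, Finset.range_eq_Ico]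
  exact (Finset.sum_Ico_consecutive f (Nat.zero_le m) h).symm

lemma bridge_case1 (n : ℕ) (D : ℕ → ℕ)
    (hG : ∀ k, 1 ≤ k → k ≤ n → ∑ i ∈ range k, D i ≤ k^2 + ∑ i ∈ Ico k n, min k (D i))
    (k : ℕ) (hk1 : 1 ≤ k) (hkn : k ≤ n) (hbig : ∀ i < k, k ≤ D i) :
    ∑ i ∈ range k, D i ≤ ∑ i ∈ range n, min (D i) k := by
  rw [sum_range_Ico k n hkn]
  have h1 : ∑ i ∈ range k, min (D i) k = k ^ 2 := by
    have : ∑ i ∈ range k, min (D i) k = ∑ i ∈ range k, k :=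
      Finset.sum_congr rfl (fun i hi => min_eq_right (hbig i (mem_range.mp hi)))
    rw [this]
    simp [Finset.sum_const, card_range, pow_two]
  have h2 : ∑ i ∈ Ico k n, min (D i) k = ∑ i ∈ Ico k n, min k (D i) := by
    exact Finset.sum_congr rfl (fun i _ => min_comm _ _)
  rw [h1, h2]
  exact hG k hk1 hkn

lemma bridge (n : ℕ) (D : ℕ → ℕ) (hD : Antitone D)
    (hG : ∀ k, 1 ≤ k → k ≤ n → ∑ i ∈ range k, D i ≤ k^2 + ∑ i ∈ Ico k n, min k (D i)) :
    ∀ k, k ≤ n → ∑ i ∈ range k, D i ≤ ∑ i ∈ range n, min (D i) k := by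
  intro k hkn
  rcases Nat.eq_zero_or_pos k with rfl | hk1
  · simp
  by_cases hbig : ∀ i < k, k ≤ D i
  · exact bridge_case1 n D hG k hk1 hkn hbig
  push_neg at hbig
  obtain ⟨i₀, hi₀k, hi₀⟩ := hbig
  set S := (range n).filter (fun i => k ≤ D i) with hSdef
  have hlow : ∀ j ∈ S, ∀ i < j, i ∈ S := by
    intro j hj i hij
    simp only [hSdef, mem_filter, mem_range] at hj ⊢
    exact ⟨lt_trans hij hj.1, le_trans hj.2 (hD (le_of_lt hij))⟩
  set t := S.card with htdef
  have hSr : S = range t := lower_eq_range S hlow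
  have hmemt : ∀ i < t, k ≤ D i := by
    intro i hi
    have : i ∈ S := by rw [hSr]; exact mem_range.mpr hi
    exact (mem_filter.mp this).2
  have htk : t < k := by
    by_contra hc
    push_neg at hc
    exact absurd (hmemt i₀ (lt_of_lt_of_le hi₀k hc)) (by omega)
  have hsmall : ∀ i, t ≤ i → i < n → D i < k := by
    intro i hti hin
    by_contra hc
    push_neg at hc
    have : i ∈ S := mem_filter.mpr ⟨mem_range.mpr hin, hc⟩
    rw [hSr, mem_range] at this
    omega
  have htn : t ≤ n := le_trans (le_of_lt htk) hkn
  -- F(t)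
  have hFt : ∑ i ∈ range t, D i ≤ ∑ i ∈ range n, min (D i) t := by
    rcases Nat.eq_zero_or_pos t with ht0 | ht1
    · rw [ht0]; simp
    exact bridge_case1 n D hG t ht1 htn (fun i hi => le_trans (le_of_lt htk) (hmemt i hi))
  -- decompose RHS at k
  have hrhs : ∑ i ∈ range n, min (D i) k
      = ∑ i ∈ range n, min (D i) t + (t * (k - t) + ∑ i ∈ Ico t n, (D i - t)) := by
    rw [sum_range_Ico t n htn (fun i => min (D i) k),
        sum_range_Ico t n htn (fun i => min (D i) t)]
    have e1 : ∑ i ∈ range t, min (D i) k = ∑ i ∈ range t, (min (D i) t + (k - t)) := by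
      refine Finset.sum_congr rfl (fun i hi => ?_)
      rw [mem_range] at hi
      have := hmemt i hi
      omega
    have e2 : ∑ i ∈ Ico t n, min (D i) k = ∑ i ∈ Ico t n, (min (D i) t + (D i - t)) := by
      refine Finset.sum_congr rfl (fun i hi => ?_)
      rw [mem_Ico] at hi
      have := hsmall i hi.1 hi.2
      omega
    rw [e1, e2, Finset.sum_add_distrib, Finset.sum_add_distrib, Finset.sum_const, card_range,
        smul_eq_mul]
    ring
  rw [hrhs, sum_range_Ico t k (le_of_lt htk) D]
  have hmid : ∑ i ∈ Ico t k, D i ≤ t * (k - t) + ∑ i ∈ Ico t n, (D i - t) := by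
    have h1 : ∑ i ∈ Ico t k, D i ≤ ∑ i ∈ Ico t k, (t + (D i - t)) :=
      Finset.sum_le_sum (fun i _ => by omega)
    have h2 : ∑ i ∈ Ico t k, (D i - t) ≤ ∑ i ∈ Ico t n, (D i - t) :=
      Finset.sum_le_sum_of_subset (Finset.Ico_subset_Ico le_rfl hkn)
    calc ∑ i ∈ Ico t k, D i ≤ ∑ i ∈ Ico t k, (t + (D i - t)) := h1
      _ = t * (k - t) + ∑ i ∈ Ico t k, (D i - t) := by
          rw [Finset.sum_add_distrib, Finset.sum_const, Nat.card_Ico, smul_eq_mul, mul_comm]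
      _ ≤ t * (k - t) + ∑ i ∈ Ico t n, (D i - t) := by omega
  omega


def achievable {n : ℕ} (d s : Fin n → ℕ) : Prop :=
  ∃ A : Fin n → Fin n → Bool,
    (∀ i, (univ.filter (fun j => A i j = true)).card = d i) ∧
    (∀ j, (univ.filter (fun i => A i j = true)).card = s j)

lemma transfer {n : ℕ} (d s : Fin n → ℕ) (h : achievable d s) (p q : Fin n)
    (hpq : s q < s p) :
    achievable d (Function.update (Function.update s p (s p - 1)) q (s q + 1)) := by
  obtain ⟨A, hr, hc⟩ := h
  have hpq' : p ≠ q := by rintro rfl; omega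
  have hex : ∃ i, A i p = true ∧ A i q = false := by
    by_contra hno
    push_neg at hno
    have hsub : univ.filter (fun i => A i p = true) ⊆ univ.filter (fun i => A i q = true) := by
      intro i hi
      simp only [mem_filter, mem_univ, true_and] at hi ⊢
      have := hno i hi
      cases hAq : A i q
      · exact absurd hAq this
      · rfl
    have := Finset.card_le_card hsub
    rw [hc p, hc q] at this
    omega
  obtain ⟨i, hip, hiq⟩ := hex
  set row : Fin n → Bool := fun j => if j = p then false else if j = q then true else A i j with hrow
  refine ⟨Function.update A i row, ?_, ?_⟩
  · intro i'
    by_cases hii : i' = i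
    · subst hii
      rw [Function.update_self, ← hr i']
      have hset : (univ.filter fun j => row j = true)
          = insert q ((univ.filter fun j => A i' j = true).erase p) := by
        ext j
        simp only [hrow, mem_filter, mem_univ, true_and, mem_insert, mem_erase]
        by_cases hjp : j = p
        · subst hjp
          simp [hpq']
        · by_cases hjq : j = q
          · subst hjq
            simp [Ne.symm hpq']
          · simp [hjp, hjq]
      rw [hset]
      have hqnot : q ∉ (univ.filter fun j => A i' j = true).erase p := by
        simp only [mem_erase, mem_filter, mem_univ, true_and]
        rintro ⟨-, hq⟩
        rw [hiq] at hq
        exact absurd hq (by simp)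
      have hpmem : p ∈ univ.filter fun j => A i' j = true := by
        simp [hip]
      have hcard1 : 1 ≤ (univ.filter fun j => A i' j = true).card :=
        Finset.card_pos.mpr ⟨p, hpmem⟩
      rw [Finset.card_insert_of_notMem hqnot, Finset.card_erase_of_mem hpmem]
      omega
    · rw [Function.update_of_ne hii]
      exact hr i'
  · intro j
    have base : (univ.filter fun i' => Function.update A i row i' j = true).card
          + (if A i j = true then 1 else 0)
        = (univ.filter fun i' => A i' j = true).card + (if row j = true then 1 else 0) := by
      rw [Finset.card_filter, Finset.card_filter,
          ← Finset.sum_erase_add univ _ (mem_univ i),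
          ← Finset.sum_erase_add univ (fun i' => if A i' j = true then 1 else 0) (mem_univ i)]
      have he : ∑ i' ∈ univ.erase i, (if Function.update A i row i' j = true then 1 else 0)
          = ∑ i' ∈ univ.erase i, (if A i' j = true then 1 else 0) := by
        refine Finset.sum_congr rfl (fun i' hi' => ?_)
        rw [Function.update_of_ne (mem_erase.mp hi').1]
      rw [he, Function.update_self]
      ring
    rw [hc j] at base
    by_cases hjp : j = p
    · have h1 : row j = false := by rw [hrow]; simp [hjp]
      have hip' : A i j = true := by rw [hjp]; exact hip
      have h2 : Function.update (Function.update s p (s p - 1)) q (s q + 1) j = s p - 1 := by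
        rw [hjp, Function.update_of_ne hpq', Function.update_self]
      rw [h2]
      have hsj : s j = s p := by rw [hjp]
      rw [hip', h1, hsj] at base
      simp only [if_true] at base
      have : (if (false : Bool) = true then 1 else 0) = 0 := by simp
      rw [this] at base
      omega
    · by_cases hjq : j = q
      · have h1 : row j = true := by rw [hrow]; simp [hjq, Ne.symm hpq']
        have hiq' : A i j = false := by rw [hjq]; exact hiq
        have h2 : Function.update (Function.update s p (s p - 1)) q (s q + 1) j = s q + 1 := by
          rw [hjq, Function.update_self]
        rw [h2]
        have hsj : s j = s q := by rw [hjq]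
        rw [hiq', h1, hsj] at base
        simp only [if_true] at base
        have : (if (false : Bool) = true then 1 else 0) = 0 := by simp
        rw [this] at base
        omega
      · have h1 : row j = A i j := by rw [hrow]; simp [hjp, hjq]
        have h2 : Function.update (Function.update s p (s p - 1)) q (s q + 1) j = s j := by
          rw [Function.update_of_ne hjq, Function.update_of_ne hjp]
        rw [h2]
        rw [h1] at base
        omega

def PP {n : ℕ} (f : Fin n → ℕ) (k : ℕ) : ℕ :=
  ∑ i ∈ univ.filter (fun i : Fin n => (i : ℕ) < k), f i

lemma PP_split {n : ℕ} (f : Fin n → ℕ) (a b : ℕ) (hab : a ≤ b) :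
    PP f b = PP f a + ∑ i ∈ univ.filter (fun i : Fin n => a ≤ (i : ℕ) ∧ (i : ℕ) < b), f i := by
  unfold PP
  rw [← Finset.sum_filter_add_sum_filter_not (univ.filter (fun i : Fin n => (i : ℕ) < b))
    (fun i => (i : ℕ) < a) f]
  congr 1
  · congr 1
    ext i
    simp only [mem_filter, mem_univ, true_and]
    omega
  · congr 1
    ext i
    simp only [mem_filter, mem_univ, true_and]
    omega

lemma PP_succ {n : ℕ} (f : Fin n → ℕ) (p : Fin n) :
    PP f ((p : ℕ) + 1) = PP f (p : ℕ) + f p := by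
  rw [PP_split f p (p + 1) (Nat.le_succ _)]
  congr 1
  have : univ.filter (fun i : Fin n => (p : ℕ) ≤ (i : ℕ) ∧ (i : ℕ) < (p : ℕ) + 1) = {p} := by
    ext i
    simp only [mem_filter, mem_univ, true_and, mem_singleton]
    constructor
    · intro h
      exact Fin.ext (by omega)
    · rintro rfl
      omega
  rw [this, Finset.sum_singleton]

lemma PP_top {n : ℕ} (f : Fin n → ℕ) (k : ℕ) (hk : n ≤ k) :
    PP f k = ∑ i, f i := by
  unfold PP
  congr 1
  refine Finset.filter_true_of_mem (fun i _ => ?_)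
  exact lt_of_lt_of_le i.isLt hk

lemma chain {n : ℕ} (d : Fin n → ℕ) (hd : Antitone d) :
    ∀ N : ℕ, ∀ s : Fin n → ℕ, (∑ k ∈ range n, (PP s k - PP d k)) = N →
      (∀ k : ℕ, PP d k ≤ PP s k) → (∑ i, d i = ∑ i, s i) → achievable d s →
      achievable d d := by
  intro N
  induction N using Nat.strong_induction_on with
  | _ N ih =>
    intro s hmeas hdom htot hach
    by_cases hsd : s = d
    · rwa [hsd] at hach
    -- find p : least index with s ≠ d
    have hne : (univ.filter (fun i : Fin n => s i ≠ d i)).Nonempty := by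
      rw [Finset.filter_nonempty_iff]
      by_contra hno
      push_neg at hno
      exact hsd (funext fun i => hno i (mem_univ i))
    obtain ⟨p, hpmem, hpmin⟩ := Finset.exists_min_image _ (fun i : Fin n => (i : ℕ)) hne
    simp only [mem_filter, mem_univ, true_and] at hpmem
    have hpmin' : ∀ i : Fin n, (i : ℕ) < (p : ℕ) → s i = d i := by
      intro i hi
      by_contra hc
      have := hpmin i (by simp [hc])
      omega
    -- P s p = P d p
    have hPeq : PP s (p : ℕ) = PP d (p : ℕ) := by
      refine Finset.sum_congr rfl (fun i hi => ?_)
      simp only [mem_filter, mem_univ, true_and] at hi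
      exact hpmin' i hi
    -- d p < s p
    have hps : d p < s p := by
      have h1 := hdom ((p : ℕ) + 1)
      rw [PP_succ, PP_succ, hPeq] at h1
      rcases lt_or_eq_of_le (le_of_lt (lt_of_le_of_ne (by omega) (Ne.symm hpmem))) with h | h
      · omega
      · omega
    -- find q : least index with s < d
    have hne2 : (univ.filter (fun i : Fin n => s i < d i)).Nonempty := by
      rw [Finset.filter_nonempty_iff]
      by_contra hno
      push_neg at hno
      have hle : ∀ i ∈ (univ : Finset (Fin n)), d i ≤ s i := fun i _ => hno i (mem_univ i)
      have := (Finset.sum_eq_sum_iff_of_le hle).mp htot p (mem_univ p)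
      omega
    obtain ⟨q, hqmem, hqmin⟩ := Finset.exists_min_image _ (fun i : Fin n => (i : ℕ)) hne2
    simp only [mem_filter, mem_univ, true_and] at hqmem
    have hqmin' : ∀ i : Fin n, (i : ℕ) < (q : ℕ) → d i ≤ s i := by
      intro i hi
      by_contra hc
      have := hqmin i (by simp; omega)
      omega
    have hpq : (p : ℕ) < (q : ℕ) := by
      rcases lt_trichotomy ((p : ℕ)) ((q : ℕ)) with h | h | h
      · exact h
      · exfalso
        have : p = q := Fin.ext h
        subst this
        omega
      · exfalso
        have := hpmin' q h
        omega
    have hspq : s q < s p := by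
      have : d q ≤ d p := hd (by rw [Fin.le_def]; omega)
      omega
    set s' := Function.update (Function.update s p (s p - 1)) q (s q + 1) with hs'
    have hach' : achievable d s' := transfer d s hach p q hspq
    have hpqne : p ≠ q := fun h => by rw [h] at hpq; omega
    -- relations between PP s' and PP s
    have hupd : ∀ i : Fin n, i ≠ p → i ≠ q → s' i = s i := by
      intro i h1 h2
      rw [hs', Function.update_of_ne h2, Function.update_of_ne h1]
    have hA : ∀ k : ℕ, k ≤ (p : ℕ) → PP s' k = PP s k := by
      intro k hk
      refine Finset.sum_congr rfl (fun i hi => ?_)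
      simp only [mem_filter, mem_univ, true_and] at hi
      exact hupd i (fun h => by rw [h] at hi; omega) (fun h => by rw [h] at hi; omega)
    have hB : ∀ k : ℕ, (p : ℕ) < k → k ≤ (q : ℕ) → PP s k = PP s' k + 1 := by
      intro k hk1 hk2
      have hpmemf : p ∈ univ.filter (fun i : Fin n => (i : ℕ) < k) := by
        simp only [mem_filter, mem_univ, true_and]; omega
      have step1 : PP s' k = ∑ i ∈ univ.filter (fun i : Fin n => (i : ℕ) < k),
          Function.update s p (s p - 1) i := by
        refine Finset.sum_congr rfl (fun i hi => ?_)
        simp only [mem_filter, mem_univ, true_and] at hi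
        rw [hs', Function.update_of_ne (fun h => by rw [h] at hi; omega)]
      rw [step1, Finset.sum_update_of_mem hpmemf]
      unfold PP
      rw [← Finset.sum_erase_add _ s hpmemf, Finset.sdiff_singleton_eq_erase]
      omega
    have hC : ∀ k : ℕ, (q : ℕ) < k → PP s' k = PP s k := by
      intro k hk
      have hpmemf : p ∈ univ.filter (fun i : Fin n => (i : ℕ) < k) := by
        simp only [mem_filter, mem_univ, true_and]; omega
      have hqmemf : q ∈ univ.filter (fun i : Fin n => (i : ℕ) < k) := by
        simp only [mem_filter, mem_univ, true_and]; omega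
      unfold PP
      rw [hs', Finset.sum_update_of_mem hqmemf, Finset.sdiff_singleton_eq_erase,
          Finset.sum_update_of_mem (Finset.mem_erase.mpr ⟨hpqne, hpmemf⟩),
          Finset.sdiff_singleton_eq_erase]
      rw [← Finset.sum_erase_add _ s hqmemf, ← Finset.sum_erase_add _ s
          (Finset.mem_erase.mpr ⟨hpqne, hpmemf⟩)]
      omega
    -- strict dominance on (p, q]
    have hBdom : ∀ k : ℕ, (p : ℕ) < k → k ≤ (q : ℕ) → PP d k + 1 ≤ PP s k := by
      intro k hk1 hk2
      have h1 : PP d k = PP d ((p : ℕ) + 1) + ∑ i ∈ univ.filter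
          (fun i : Fin n => (p : ℕ) + 1 ≤ (i : ℕ) ∧ (i : ℕ) < k), d i := PP_split d _ k (by omega)
      have h2 : PP s k = PP s ((p : ℕ) + 1) + ∑ i ∈ univ.filter
          (fun i : Fin n => (p : ℕ) + 1 ≤ (i : ℕ) ∧ (i : ℕ) < k), s i := PP_split s _ k (by omega)
      have h3 : PP d ((p : ℕ) + 1) + 1 ≤ PP s ((p : ℕ) + 1) := by
        rw [PP_succ, PP_succ, hPeq]
        omega
      have h4 : ∑ i ∈ univ.filter (fun i : Fin n => (p : ℕ) + 1 ≤ (i : ℕ) ∧ (i : ℕ) < k), d i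
          ≤ ∑ i ∈ univ.filter (fun i : Fin n => (p : ℕ) + 1 ≤ (i : ℕ) ∧ (i : ℕ) < k), s i := by
        refine Finset.sum_le_sum (fun i hi => ?_)
        simp only [mem_filter, mem_univ, true_and] at hi
        exact hqmin' i (by omega)
      omega
    -- new dominance
    have hdom' : ∀ k : ℕ, PP d k ≤ PP s' k := by
      intro k
      rcases le_or_gt k (p : ℕ) with h | h
      · rw [hA k h]; exact hdom k
      rcases le_or_gt k (q : ℕ) with h2 | h2
      · have := hB k h h2
        have := hBdom k h h2
        omega
      · rw [hC k h2]; exact hdom k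
    -- new total
    have htot' : ∑ i, d i = ∑ i, s' i := by
      rw [← PP_top s' n le_rfl, hC n q.isLt, PP_top s n le_rfl]
      exact htot
    -- measure decreases
    have hmeas' : ∑ k ∈ range n, (PP s' k - PP d k) < N := by
      rw [← hmeas]
      refine Finset.sum_lt_sum (fun k _ => ?_) ⟨(q : ℕ), mem_range.mpr q.isLt, ?_⟩
      · rcases le_or_gt k (p : ℕ) with h | h
        · rw [hA k h]
        rcases le_or_gt k (q : ℕ) with h2 | h2
        · have := hB k h h2
          omega
        · rw [hC k h2]
      · have h1 := hB (q : ℕ) hpq le_rfl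
        have h2 := hBdom (q : ℕ) hpq le_rfl
        omega
    exact ih _ hmeas' s' rfl hdom' htot' hach'


lemma conv_lt {n : ℕ} (f : Fin n → ℕ) (F : ℕ → ℕ) (hfF : ∀ i : Fin n, f i = F (i : ℕ))
    (k : ℕ) (hk : k ≤ n) :
    ∑ i ∈ univ.filter (fun i : Fin n => (i : ℕ) < k), f i = ∑ i ∈ range k, F i := by
  rw [Finset.sum_filter]
  have h1 : ∀ i : Fin n, (if (i : ℕ) < k then f i else 0)
      = (fun m => if m < k then F m else 0) (i : ℕ) := by
    intro i
    by_cases h : (i : ℕ) < k <;> simp [h, hfF i]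
  rw [Finset.sum_congr rfl (fun i _ => h1 i),
      Fin.sum_univ_eq_sum_range (fun m => if m < k then F m else 0) n, ← Finset.sum_filter]
  congr 1
  ext m
  simp only [mem_filter, mem_range]
  omega

lemma conv_ge {n : ℕ} (f : Fin n → ℕ) (F : ℕ → ℕ) (hfF : ∀ i : Fin n, f i = F (i : ℕ))
    (k : ℕ) :
    ∑ i ∈ univ.filter (fun i : Fin n => k ≤ (i : ℕ)), f i = ∑ i ∈ Ico k n, F i := by
  rw [Finset.sum_filter]
  have h1 : ∀ i : Fin n, (if k ≤ (i : ℕ) then f i else 0)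
      = (fun m => if k ≤ m then F m else 0) (i : ℕ) := by
    intro i
    by_cases h : k ≤ (i : ℕ) <;> simp [h, hfF i]
  rw [Finset.sum_congr rfl (fun i _ => h1 i),
      Fin.sum_univ_eq_sum_range (fun m => if k ≤ m then F m else 0) n, ← Finset.sum_filter]
  congr 1
  ext m
  simp only [mem_filter, mem_range, mem_Ico]
  omega

lemma conv_card {n : ℕ} (P : ℕ → Prop) [DecidablePred P] :
    ((univ : Finset (Fin n)).filter (fun i : Fin n => P (i : ℕ))).card = ((range n).filter P).card := by
  rw [Finset.card_filter, Finset.card_filter,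
      Fin.sum_univ_eq_sum_range (fun m => if P m then 1 else 0) n]

lemma doublecount (n k : ℕ) (D : ℕ → ℕ) :
    ∑ j ∈ range k, ((range n).filter (fun i => j < D i)).card
      = ∑ i ∈ range n, min (D i) k := by
  have h1 : ∀ j, ((range n).filter (fun i => j < D i)).card
      = ∑ i ∈ range n, if j < D i then 1 else 0 := fun j => Finset.card_filter _ _
  rw [Finset.sum_congr rfl (fun j _ => h1 j), Finset.sum_comm]
  refine Finset.sum_congr rfl (fun i _ => ?_)
  rw [← Finset.card_filter]
  have h2 : (range k).filter (fun j => j < D i) = range (min k (D i)) := by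
    ext m
    simp only [mem_filter, mem_range]
    omega
  rw [h2, card_range]
  omega

/-- Erdős–Gallai type criterion for bipartite graphic sequences: a decreasing
sequence `d` is bipartite graphic iff
`∑_{i=1}^k d_i ≤ k² + ∑_{i=k+1}^n min{k, d_i}` for all `1 ≤ k ≤ n`. -/
theorem stmt_3 (n : ℕ) (d : Fin n → ℕ) (hd : Antitone d) :
    (∃ A : Fin n → Fin n → Bool,
        (∀ i, (univ.filter (fun j => A i j = true)).card = d i) ∧
        (∀ j, (univ.filter (fun i => A i j = true)).card = d j))
    ↔ (∀ k : ℕ, 1 ≤ k → k ≤ n →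
        ∑ i ∈ univ.filter (fun i : Fin n => (i : ℕ) < k), d i
          ≤ k ^ 2 + ∑ i ∈ univ.filter (fun i : Fin n => k ≤ (i : ℕ)), min k (d i)) := by
  constructor
  · -- forward: double counting
    rintro ⟨A, hr, hc⟩ k hk1 hkn
    set e : Fin n → ℕ := fun j =>
      ((univ.filter (fun i : Fin n => (i : ℕ) < k)).filter (fun i => A i j = true)).card with he
    have cardlt : (univ.filter (fun i : Fin n => (i : ℕ) < k)).card = k := by
      rw [Finset.card_eq_sum_ones, conv_lt (fun _ : Fin n => 1) (fun _ => 1) (fun _ => rfl) k hkn,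
          Finset.sum_const, card_range, smul_eq_mul, mul_one]
    have step1 : ∑ i ∈ univ.filter (fun i : Fin n => (i : ℕ) < k), d i = ∑ j : Fin n, e j := by
      have h1 : ∀ i ∈ univ.filter (fun i : Fin n => (i : ℕ) < k),
          d i = ∑ j : Fin n, if A i j = true then 1 else 0 := by
        intro i _
        rw [← hr i, Finset.card_filter]
      rw [Finset.sum_congr rfl h1, Finset.sum_comm]
      exact Finset.sum_congr rfl (fun j _ => (Finset.card_filter _ _).symm)
    have split : ∑ j : Fin n, e j
        = ∑ j ∈ univ.filter (fun j : Fin n => (j : ℕ) < k), e j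
          + ∑ j ∈ univ.filter (fun j : Fin n => ¬ (j : ℕ) < k), e j :=
      (Finset.sum_filter_add_sum_filter_not univ _ e).symm
    have hnotlt : univ.filter (fun j : Fin n => ¬ (j : ℕ) < k)
        = univ.filter (fun j : Fin n => k ≤ (j : ℕ)) := by
      refine Finset.filter_congr (fun j _ => ?_)
      simp only [not_lt]
    have hek : ∀ j : Fin n, e j ≤ k := fun j =>
      le_trans (Finset.card_le_card (Finset.filter_subset _ _)) (le_of_eq cardlt)
    have b1 : ∑ j ∈ univ.filter (fun j : Fin n => (j : ℕ) < k), e j ≤ k ^ 2 := by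
      calc ∑ j ∈ univ.filter (fun j : Fin n => (j : ℕ) < k), e j
          ≤ ∑ _j ∈ univ.filter (fun j : Fin n => (j : ℕ) < k), k :=
            Finset.sum_le_sum (fun j _ => hek j)
        _ = k * k := by rw [Finset.sum_const, cardlt, smul_eq_mul]
        _ = k ^ 2 := (pow_two k).symm
    have b2 : ∀ j : Fin n, e j ≤ min k (d j) := by
      intro j
      refine le_min (hek j) ?_
      rw [← hc j]
      refine Finset.card_le_card ?_
      intro i hi
      rw [mem_filter] at hi
      rw [mem_filter]
      exact ⟨mem_univ i, hi.2⟩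
    rw [step1, split, hnotlt]
    exact Nat.add_le_add b1 (Finset.sum_le_sum (fun j _ => b2 j))
  · -- backward
    intro hG
    set D : ℕ → ℕ := fun m => if h : m < n then d ⟨m, h⟩ else 0 with hDdef
    have hDval : ∀ i : Fin n, d i = D (i : ℕ) := by
      intro i
      rw [hDdef]
      simp [i.isLt]
    have hD : Antitone D := by
      intro a b hab
      rw [hDdef]
      by_cases hb : b < n
      · have ha : a < n := lt_of_le_of_lt hab hb
        simp only [dif_pos ha, dif_pos hb]
        exact hd (by rw [Fin.le_def]; exact hab)
      · simp only [dif_neg hb]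
        exact Nat.zero_le _
    have hGn : ∀ k, 1 ≤ k → k ≤ n →
        ∑ i ∈ range k, D i ≤ k ^ 2 + ∑ i ∈ Ico k n, min k (D i) := by
      intro k hk1 hkn
      have := hG k hk1 hkn
      rwa [conv_lt d D hDval k hkn,
        conv_ge (fun i => min k (d i)) (fun m => min k (D m))
          (fun i => by show min k (d i) = min k (D (i : ℕ)); rw [hDval i]) k] at this
    have hDn : ∀ m, D m ≤ n := by
      intro m
      rcases Nat.eq_zero_or_pos n with hn0 | hn1
      · rw [hDdef]
        have : ¬ m < n := by omega
        simp [this]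
      have hG1 := hGn 1 le_rfl hn1
      rw [Finset.sum_range_one] at hG1
      have hb : ∑ i ∈ Ico 1 n, min 1 (D i) ≤ ∑ _i ∈ Ico 1 n, 1 :=
        Finset.sum_le_sum (fun i _ => min_le_left _ _)
      rw [Finset.sum_const, Nat.card_Ico, smul_eq_mul, mul_one] at hb
      have hone : (1 : ℕ) ^ 2 = 1 := by norm_num
      rw [hone] at hG1
      have hm0 : D m ≤ D 0 := hD (Nat.zero_le m)
      omega
    have hdn : ∀ i : Fin n, d i ≤ n := fun i => by rw [hDval i]; exact hDn _
    have hF := bridge n D hD hGn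
    set s0 : Fin n → ℕ := fun j => (univ.filter (fun i : Fin n => (j : ℕ) < d i)).card
      with hs0def
    set S0 : ℕ → ℕ := fun j => ((range n).filter (fun i => j < D i)).card with hS0def
    have hs0 : ∀ j : Fin n, s0 j = S0 (j : ℕ) := by
      intro j
      rw [hs0def, hS0def]
      show (univ.filter (fun i : Fin n => (j : ℕ) < d i)).card
        = ((range n).filter (fun i => (j : ℕ) < D i)).card
      have h1 : (univ.filter (fun i : Fin n => (j : ℕ) < d i))
          = (univ.filter (fun i : Fin n => ((j : ℕ) < D (i : ℕ)))) :=
        Finset.filter_congr (fun i _ => by rw [hDval i])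
      rw [h1]
      exact conv_card (fun m => (j : ℕ) < D m)
    have hbase : achievable d s0 := by
      refine ⟨fun i j => decide ((j : ℕ) < d i), ?_, ?_⟩
      · intro i
        have hfe : (univ.filter fun j : Fin n => decide ((j : ℕ) < d i) = true)
            = (univ.filter fun j : Fin n => (j : ℕ) < d i) :=
          Finset.filter_congr (fun j _ => by simp)
        rw [hfe, conv_card (fun m => m < d i)]
        have h2 : (range n).filter (fun m => m < d i) = range (d i) := by
          ext m
          simp only [mem_filter, mem_range]
          have := hdn i
          omega
        rw [h2, card_range]
      · intro j
        have hfe : (univ.filter fun i : Fin n => decide ((j : ℕ) < d i) = true)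
            = (univ.filter fun i : Fin n => (j : ℕ) < d i) :=
          Finset.filter_congr (fun i _ => by simp)
        rw [hfe]
    have hdom_le : ∀ k, k ≤ n → PP d k ≤ PP s0 k := by
      intro k hkn
      unfold PP
      rw [conv_lt d D hDval k hkn, conv_lt s0 S0 hs0 k hkn]
      rw [hS0def]
      rw [doublecount n k D]
      exact hF k hkn
    have htot : ∑ i, d i = ∑ i, s0 i := by
      rw [← PP_top d n le_rfl, ← PP_top s0 n le_rfl]
      unfold PP
      rw [conv_lt d D hDval n le_rfl, conv_lt s0 S0 hs0 n le_rfl, hS0def, doublecount n n D]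
      refine Finset.sum_congr rfl (fun m _ => ?_)
      have := hDn m
      omega
    have hdom : ∀ k, PP d k ≤ PP s0 k := by
      intro k
      rcases le_or_gt k n with hkn | hkn
      · exact hdom_le k hkn
      · rw [PP_top d k hkn.le, PP_top s0 k hkn.le, htot]
    exact chain d hd _ s0 rfl hdom htot hbase
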